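/- Let a, b, η > 0, let L ≥ 1 be an integer, and let w_0 be a real number with 0 < w_0 ≤ (b/a)^{1/L}. Define the sequence w_{t+1} = w_t + η·1{a w_t^L < b} for t = 0, 1, 2, …. Then for every t ≥ 0, w_t = w_0 + η · min(t, ⌈((b/a)^{1/L} − w_0)/η⌉). Consequently, the relative gap between the saturation times of two components with ratios b_1/a_1 ≥ b_k/a_k (taking w_0 → 0) is ((b_1/a_1)/(b_k/a_k))^{1/L} − 1, which is decreasing in the depth L. -/

import Mathlib

lemma stmt11_aux (a b : ℝ) (L : ℕ) (hL : 1 ≤ L) (ha : 0 < a) (hb : 0 < b)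
    (x : ℝ) (hx : 0 < x) :
    (a * x ^ L < b) ↔ x < (b / a) ^ (1 / (L : ℝ)) := by
  have hba : (0:ℝ) < b / a := div_pos hb ha
  have hW : ((b / a) ^ (1 / (L : ℝ))) ^ L = b / a := by
    rw [one_div]
    exact Real.rpow_inv_natCast_pow hba.le (by omega)
  rw [mul_comm, ← lt_div_iff₀ ha]
  constructor
  · intro h
    by_contra hcon
    push_neg at hcon
    have := pow_le_pow_left₀ (Real.rpow_pos_of_pos hba _).le hcon L
    rw [hW] at this
    linarith
  · intro h
    calc x ^ L < ((b / a) ^ (1 / (L : ℝ))) ^ L :=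
          pow_lt_pow_left₀ h hx.le (by omega)
      _ = b / a := hW

/-- Per-component evolution of Spectral Gradient Descent for the depth-`L`
deep linear model (Proposition B.3): for the recursion `w_{t+1} = w_t + η·1{a w_t^L < b}`
started at `w_0 ∈ (0, (b/a)^{1/L}]`, one has
`w_t = w_0 + η · min(t, ⌈((b/a)^{1/L} − w_0)/η⌉)` for all `t`.
Consequently (taking `w_0 → 0`), the relative gap between the saturation values/times of two
components with ratios `r1 ≥ r2 > 0` equals `(r1/r2)^{1/L} − 1`, which is decreasing in the
depth `L`. -/
theorem stmt11 (a b η w0 : ℝ) (L : ℕ) (hL : 1 ≤ L)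
    (ha : 0 < a) (hb : 0 < b) (hη : 0 < η)
    (hw0 : 0 < w0) (hw0' : w0 ≤ (b / a) ^ (1 / (L : ℝ)))
    (w : ℕ → ℝ) (h0 : w 0 = w0)
    (hrec : ∀ t : ℕ, w (t + 1) = w t + η * (if a * w t ^ L < b then 1 else 0)) :
    (∀ t : ℕ,
      w t = w0 + η * min (t : ℝ) ((⌈((b / a) ^ (1 / (L : ℝ)) - w0) / η⌉ : ℤ) : ℝ)) ∧
    (∀ r1 r2 : ℝ, 0 < r2 → r2 ≤ r1 →
      (r1 ^ (1 / (L : ℝ)) - r2 ^ (1 / (L : ℝ))) / r2 ^ (1 / (L : ℝ))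
        = (r1 / r2) ^ (1 / (L : ℝ)) - 1) ∧
    (∀ r1 r2 : ℝ, 0 < r2 → r2 ≤ r1 → ∀ L1 L2 : ℕ, 1 ≤ L1 → L1 ≤ L2 →
      (r1 / r2) ^ (1 / (L2 : ℝ)) - 1 ≤ (r1 / r2) ^ (1 / (L1 : ℝ)) - 1) := by
  set W : ℝ := (b / a) ^ (1 / (L : ℝ)) with hWdef
  set N : ℤ := ⌈(W - w0) / η⌉ with hNdef
  have hN0 : 0 ≤ N := Int.ceil_nonneg (div_nonneg (by linarith) hη.le)
  have hNge : W - w0 ≤ η * N := by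
    have := Int.le_ceil ((W - w0) / η)
    calc W - w0 = ((W - w0) / η) * η := by field_simp
      _ ≤ (N : ℝ) * η := by
          apply mul_le_mul_of_nonneg_right this hη.le
      _ = η * N := by ring
  refine ⟨?_, ?_, ?_⟩
  · intro t
    induction t with
    | zero => simpa [min_def, hN0, Int.cast_nonneg hN0] using h0
    | succ t ih =>
      rcases lt_or_ge (t : ℤ) N with htN | htN
      · -- t < N, so w t = w0 + η t < W, condition holds
        have hmin : min (t : ℝ) (N : ℝ) = t := by
          apply min_eq_left
          exact_mod_cast htN.le
        have hwt : w t = w0 + η * t := by rw [ih, hmin]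
        have hlt : w t < W := by
          have : (t : ℝ) < (W - w0) / η := by
            have := Int.lt_ceil.mp htN
            exact_mod_cast this
          have : η * t < W - w0 := by
            rw [lt_div_iff₀ hη] at this; linarith [this]
          linarith [hwt]
        have hpos : 0 < w t := by
          rw [hwt]; positivity
        have hcond : a * w t ^ L < b := (stmt11_aux a b L hL ha hb _ hpos).mpr hlt
        have hmin' : min ((t : ℝ) + 1) (N : ℝ) = (t : ℝ) + 1 := by
          apply min_eq_left
          have : (t : ℤ) + 1 ≤ N := htN
          exact_mod_cast this
        rw [hrec t, if_pos hcond]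
        push_cast
        rw [hmin', hwt]
        ring
      · -- t ≥ N: saturated
        have hmin : min (t : ℝ) (N : ℝ) = N := by
          apply min_eq_right; exact_mod_cast htN
        have hwt : w t = w0 + η * N := by rw [ih, hmin]
        have hge : W ≤ w t := by rw [hwt]; linarith
        have hpos : 0 < w t := by
          rw [hwt]
          have : (0:ℝ) ≤ η * N := by positivity
          linarith
        have hcond : ¬ a * w t ^ L < b := by
          rw [stmt11_aux a b L hL ha hb _ hpos]; linarith
        have hmin' : min ((t : ℝ) + 1) (N : ℝ) = N := by
          apply min_eq_right
          have : (N : ℝ) ≤ t := by exact_mod_cast htN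
          linarith
        rw [hrec t, if_neg hcond]
        push_cast
        rw [hmin', hwt]
        ring
  · intro r1 r2 h2 h12
    have h1 : 0 < r1 := lt_of_lt_of_le h2 h12
    have hp2 : (0:ℝ) < r2 ^ (1 / (L:ℝ)) := Real.rpow_pos_of_pos h2 _
    rw [Real.div_rpow h1.le h2.le]
    field_simp
  · intro r1 r2 h2 h12 L1 L2 hL1 hL12
    have hq : 1 ≤ r1 / r2 := (one_le_div h2).mpr h12
    have : 1 / (L2 : ℝ) ≤ 1 / (L1 : ℝ) := by
      apply one_div_le_one_div_of_le
      · exact_mod_cast Nat.pos_of_ne_zero (by omega)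
      · exact_mod_cast hL12
    have := Real.rpow_le_rpow_of_exponent_le hq this
    linarith
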